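/- Let S be a strongly ℤ^k-graded unital ring with grading 𝒜 : (Fin k → ℤ) → AddSubgroup S, and suppose S is semi-commutative: a * b = 0 implies a * s * b = 0 for all s ∈ S. Let f_1, ..., f_ℓ ∈ S and suppose there exists a non-zero g ∈ S with f_j * g = 0 for all j. Then there exists a non-zero element h ∈ 𝒜 0, homogeneous of degree 0, such that f_j * h = 0 for all j. -/

import Mathlib

open DirectSum

section AnnihilatorAux

variable {k : ℕ} {S : Type*} [Ring S]
variable (𝒜 : (Fin k → ℤ) → AddSubgroup S) [GradedRing 𝒜]

/-- Component of a finite sum of homogeneous elements. -/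
lemma aux_sum_component {ι : Type*} (T : Finset ι) (c : ι → S)
    (d : ι → (Fin k → ℤ)) (hc : ∀ i ∈ T, c i ∈ 𝒜 (d i)) (w : Fin k → ℤ) :
    (DirectSum.decompose 𝒜 (∑ i ∈ T, c i) w : S)
      = ∑ i ∈ T, if d i = w then c i else 0 := by
  classical
  rw [DirectSum.decompose_sum, DFinsupp.finset_sum_apply, AddSubmonoidClass.coe_finset_sum]
  refine Finset.sum_congr rfl fun i hi => ?_
  by_cases h : d i = w
  · simp [h, DirectSum.decompose_of_mem_same 𝒜 (h ▸ hc i hi)]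
  · simp [h, DirectSum.decompose_of_mem_ne 𝒜 (hc i hi) h]

/-- If a finite sum of homogeneous elements vanishes and some index has a degree
achieved only by itself, then that term vanishes. -/
lemma aux_isolated_term {ι : Type*} (T : Finset ι) (c : ι → S)
    (d : ι → (Fin k → ℤ)) (hc : ∀ i ∈ T, c i ∈ 𝒜 (d i))
    (hsum : ∑ i ∈ T, c i = 0) {i₀ : ι} (hi₀ : i₀ ∈ T)
    (huniq : ∀ i ∈ T, d i = d i₀ → i = i₀) : c i₀ = 0 := by
  classical
  have h := aux_sum_component 𝒜 T c d hc (d i₀)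
  rw [hsum] at h
  simp only [DirectSum.decompose_zero, DirectSum.zero_apply, ZeroMemClass.coe_zero] at h
  rw [Finset.sum_eq_single_of_mem i₀ hi₀ (fun i hi hne => by
    rw [if_neg (fun hd => hne (huniq i hi hd))]), if_pos rfl] at h
  exact h.symm

/-- Extract a lex-maximum of a nonempty finset in `Fin k → ℤ`. -/
lemma aux_exists_max (A : Finset (Fin k → ℤ)) (h : A.Nonempty) :
    ∃ m ∈ A, ∀ x ∈ A, toLex x ≤ toLex m := by
  classical
  letI : WellFoundedLT (Fin k) := inferInstance
  obtain ⟨m, hm, hmax⟩ := A.exists_max_image (fun x => toLex x) h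
  exact ⟨m, hm, hmax⟩

lemma aux_lex_uniq {x v xm vm : Fin k → ℤ} (hx : toLex x ≤ toLex xm)
    (hv : toLex v ≤ toLex vm) (h : x + v = xm + vm) : x = xm ∧ v = vm := by
  letI : WellFoundedLT (Fin k) := inferInstance
  rcases hx.lt_or_eq with hlt | heq
  · exfalso
    have h2 : toLex x + toLex v < toLex xm + toLex vm := add_lt_add_of_lt_of_le hlt hv
    have h3 : toLex (x + v) < toLex (xm + vm) := h2
    rw [h] at h3
    exact lt_irrefl _ h3
  · have hx' : x = xm := toLex.injective heq
    subst hx'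
    exact ⟨rfl, add_left_cancel h⟩

end AnnihilatorAux

theorem exists_degree_zero_annihilator_of_semicommutative_strongly_graded
    {k : ℕ} {S : Type*} [Ring S]
    (𝒜 : (Fin k → ℤ) → AddSubgroup S) [GradedRing 𝒜]
    (hstrong : ∀ v w : Fin k → ℤ, ∀ z ∈ 𝒜 (v + w),
      z ∈ AddSubmonoid.closure {p : S | ∃ x ∈ 𝒜 v, ∃ y ∈ 𝒜 w, p = x * y})
    (hsc : ∀ a b : S, a * b = 0 → ∀ s : S, a * s * b = 0)
    {ℓ : ℕ} (f : Fin ℓ → S) (g : S) (hg : g ≠ 0)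
    (hfg : ∀ j : Fin ℓ, f j * g = 0) :
    ∃ h ∈ 𝒜 (0 : Fin k → ℤ), h ≠ 0 ∧ ∀ j : Fin ℓ, f j * h = 0 := by
  classical
  letI : WellFoundedLT (Fin k) := inferInstance
  -- pick a common annihilator of minimal support cardinality
  have hex : ∃ n : ℕ, ∃ s : S, s ≠ 0 ∧ (∀ j, f j * s = 0) ∧
      (DirectSum.decompose 𝒜 s).support.card = n :=
    ⟨_, g, hg, hfg, rfl⟩
  obtain ⟨g₀, hg₀ne, hfg₀, hcard⟩ := Nat.find_spec hex
  set n := Nat.find hex with hn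
  have hmin : ∀ s : S, s ≠ 0 → (∀ j, f j * s = 0) →
      n ≤ (DirectSum.decompose 𝒜 s).support.card :=
    fun s h1 h2 => Nat.find_min' hex ⟨s, h1, h2, rfl⟩
  set B : Finset (Fin k → ℤ) := (DirectSum.decompose 𝒜 g₀).support with hB
  -- the key minimality lemma: a homogeneous element killing one component of `g₀` kills `g₀`
  have hkill : ∀ (u : Fin k → ℤ) (y : S), y ∈ 𝒜 u → ∀ v ∈ B,
      y * (DirectSum.decompose 𝒜 g₀ v : S) = 0 → y * g₀ = 0 := by
    intro u y hy v hv hyv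
    by_contra hne
    have hfs : ∀ j, f j * (y * g₀) = 0 := by
      intro j
      rw [← mul_assoc]
      exact hsc (f j) g₀ (hfg₀ j) y
    have hsub : (DirectSum.decompose 𝒜 (y * g₀)).support ⊆ (B.erase v).image (u + ·) := by
      intro d hd
      rw [DFinsupp.mem_support_iff] at hd
      have hcomp : (DirectSum.decompose 𝒜 (y * g₀) d : S)
          = y * (DirectSum.decompose 𝒜 g₀ (d - u) : S) := by
        have := DirectSum.coe_decompose_mul_add_of_left_mem 𝒜 (i := u) (j := d - u)
          (b := g₀) hy
        rwa [add_sub_cancel] at this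
      refine Finset.mem_image.2 ⟨d - u, ?_, by abel⟩
      refine Finset.mem_erase.2 ⟨?_, ?_⟩
      · rintro rfl
        exact hd (ZeroMemClass.coe_eq_zero.mp (by rw [hcomp, hyv]))
      · rw [hB, DFinsupp.mem_support_iff]
        intro h0
        exact hd (ZeroMemClass.coe_eq_zero.mp
          (by rw [hcomp, h0, ZeroMemClass.coe_zero, mul_zero]))
    have hlt : (DirectSum.decompose 𝒜 (y * g₀)).support.card < n := by
      calc (DirectSum.decompose 𝒜 (y * g₀)).support.card
          ≤ ((B.erase v).image (u + ·)).card := Finset.card_le_card hsub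
        _ ≤ (B.erase v).card := Finset.card_image_le
        _ < B.card := Finset.card_erase_lt_of_mem hv
        _ = n := hcard
    exact absurd (hmin _ hne hfs) (not_le.2 hlt)
  -- `g₀` is nonzero, so its support is nonempty
  have hBne : B.Nonempty := by
    rw [Finset.nonempty_iff_ne_empty]
    intro h0
    apply hg₀ne
    have := DirectSum.sum_support_decompose 𝒜 g₀
    rw [← hB, h0, Finset.sum_empty] at this
    exact this.symm
  obtain ⟨vm, hvmB, hvmax⟩ := aux_exists_max B hBne
  -- main induction: peeling off top homogeneous components of a annihilating element
  have key : ∀ (A : Finset (Fin k → ℤ)), ∀ (p : (Fin k → ℤ) → S),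
      (∀ x ∈ A, p x ∈ 𝒜 x) → (∀ t : S, (∑ x ∈ A, p x) * t * g₀ = 0) →
      ∀ x ∈ A, ∀ t : S, p x * t * g₀ = 0 := by
    intro A
    induction A using Finset.strongInduction with
    | _ A ih =>
      intro p hp hzero x hx t
      obtain ⟨xm, hxm, hxmax⟩ := aux_exists_max A ⟨x, hx⟩
      have hstep : ∀ t' : S, p xm * t' * g₀ = 0 := by
        have hhom : ∀ (u : Fin k → ℤ) (t' : S), t' ∈ 𝒜 u → p xm * t' * g₀ = 0 := by
          intro u t' ht'
          have hy : p xm * t' ∈ 𝒜 (xm + u) := SetLike.mul_mem_graded (hp xm hxm) ht'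
          refine hkill (xm + u) (p xm * t') hy vm hvmB ?_
          -- isolate the top term of the vanishing product
          have hsum : ∑ i ∈ A ×ˢ B,
              (p i.1 * t' * (DirectSum.decompose 𝒜 g₀ i.2 : S)) = 0 := by
            rw [Finset.sum_product]
            have : ∀ x' ∈ A, ∑ v ∈ B, p x' * t' * (DirectSum.decompose 𝒜 g₀ v : S)
                = p x' * t' * g₀ := by
              intro x' _
              rw [← Finset.mul_sum, hB, DirectSum.sum_support_decompose]
            rw [Finset.sum_congr rfl this, ← Finset.sum_mul, ← Finset.sum_mul, hzero]
          have := aux_isolated_term 𝒜 (A ×ˢ B)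
            (fun i => p i.1 * t' * (DirectSum.decompose 𝒜 g₀ i.2 : S))
            (fun i => i.1 + u + i.2)
            (fun i hi => SetLike.mul_mem_graded
              (SetLike.mul_mem_graded (hp i.1 (Finset.mem_product.1 hi).1) ht')
              (SetLike.coe_mem _))
            hsum (i₀ := (xm, vm)) (Finset.mem_product.2 ⟨hxm, hvmB⟩) ?_
          · exact this
          · rintro ⟨x', v'⟩ hi hd
            obtain ⟨hx', hv'⟩ := Finset.mem_product.1 hi
            have hsum' : x' + v' = xm + vm := by
              have : x' + u + v' = xm + u + vm := hd
              have h2 : u + (x' + v') = u + (xm + vm) := by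
                rw [show u + (x' + v') = x' + u + v' by abel,
                  show u + (xm + vm) = xm + u + vm by abel, this]
              exact add_left_cancel h2
            obtain ⟨h1, h2⟩ := aux_lex_uniq (hxmax x' hx') (hvmax v' hv') hsum'
            simp [h1, h2]
        intro t'
        induction t' using DirectSum.Decomposition.inductionOn 𝒜 with
        | zero => simp
        | homogeneous m => exact hhom _ _ (SetLike.coe_mem m)
        | add a b ha hb => rw [mul_add, add_mul, ha, hb, add_zero]
      rcases eq_or_ne x xm with rfl | hne
      · exact hstep t
      · refine ih (A.erase xm) (Finset.erase_ssubset hxm) p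
          (fun x' hx' => hp x' (Finset.mem_of_mem_erase hx')) ?_
          x (Finset.mem_erase.2 ⟨hne, hx⟩) t
        intro t'
        have : ∑ x' ∈ A.erase xm, p x' = (∑ x' ∈ A, p x') - p xm := by
          rw [← Finset.add_sum_erase A p hxm]; abel
        rw [this, sub_mul, sub_mul, hzero, hstep, sub_zero]
  -- hence every `f j` kills every homogeneous component of `g₀`
  have hann : ∀ j, f j * (DirectSum.decompose 𝒜 g₀ vm : S) = 0 := by
    intro j
    have h1 : ∀ x ∈ (DirectSum.decompose 𝒜 (f j)).support, ∀ t : S,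
        (DirectSum.decompose 𝒜 (f j) x : S) * t * g₀ = 0 := by
      refine key _ _ (fun x _ => SetLike.coe_mem _) ?_
      intro t
      rw [DirectSum.sum_support_decompose]
      exact hsc (f j) g₀ (hfg₀ j) t
    have h2 : ∀ x ∈ (DirectSum.decompose 𝒜 (f j)).support,
        (DirectSum.decompose 𝒜 (f j) x : S) * (DirectSum.decompose 𝒜 g₀ vm : S) = 0 := by
      intro x hx
      have h3 : (DirectSum.decompose 𝒜 (f j) x : S) * g₀ = 0 := by
        have := h1 x hx 1
        rwa [mul_one] at this
      have h4 := DirectSum.coe_decompose_mul_add_of_left_mem 𝒜 (i := x) (j := vm)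
        (b := g₀) (SetLike.coe_mem (DirectSum.decompose 𝒜 (f j) x))
      rw [h3] at h4
      simp only [DirectSum.decompose_zero, DirectSum.zero_apply, ZeroMemClass.coe_zero] at h4
      exact h4.symm
    calc f j * (DirectSum.decompose 𝒜 g₀ vm : S)
        = (∑ x ∈ (DirectSum.decompose 𝒜 (f j)).support,
            (DirectSum.decompose 𝒜 (f j) x : S)) * (DirectSum.decompose 𝒜 g₀ vm : S) := by
          rw [DirectSum.sum_support_decompose]
      _ = ∑ x ∈ (DirectSum.decompose 𝒜 (f j)).support,
            (DirectSum.decompose 𝒜 (f j) x : S) * (DirectSum.decompose 𝒜 g₀ vm : S) :=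
          Finset.sum_mul _ _ _
      _ = 0 := Finset.sum_eq_zero h2
  -- the chosen component is nonzero
  set gv : S := (DirectSum.decompose 𝒜 g₀ vm : S) with hgv
  have hgvne : gv ≠ 0 := by
    have := DFinsupp.mem_support_iff.1 hvmB
    simpa [hgv, ZeroMemClass.coe_eq_zero] using this
  -- use strong grading to move it into degree 0
  have hexy : ∃ y ∈ 𝒜 (-vm), y * gv ≠ 0 := by
    by_contra hno
    push_neg at hno
    have h1 : (1 : S) ∈ 𝒜 (vm + -vm) := by
      rw [add_neg_cancel]
      exact SetLike.one_mem_graded 𝒜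
    have hcl := hstrong vm (-vm) 1 h1
    have hz : ∀ z ∈ AddSubmonoid.closure {p : S | ∃ x ∈ 𝒜 vm, ∃ y ∈ 𝒜 (-vm), p = x * y},
        z * gv = 0 := by
      intro z hz
      induction hz using AddSubmonoid.closure_induction with
      | mem p hp =>
        obtain ⟨x, _, y, hy, rfl⟩ := hp
        rw [mul_assoc, hno y hy, mul_zero]
      | zero => rw [zero_mul]
      | add a b _ _ ha hb => rw [add_mul, ha, hb, add_zero]
    have := hz 1 hcl
    rw [one_mul] at this
    exact hgvne this
  obtain ⟨y, hy, hygv⟩ := hexy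
  refine ⟨y * gv, ?_, hygv, ?_⟩
  · have := SetLike.mul_mem_graded hy (SetLike.coe_mem (DirectSum.decompose 𝒜 g₀ vm))
    rwa [neg_add_cancel] at this
  · intro j
    rw [← mul_assoc]
    exact hsc (f j) gv (hann j) y
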